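/- arXiv:0910.4613 — 3 statements merged into one kernel-verified Lean document; each statement's English description precedes it below -/
import Mathlib

section
/- Let ν > 0, λ₁ > 0, β > 0, and t₁(s) = 1/(2·ln 2·(ν+s)) − λ₁/(1+β). The function t₁ is strictly decreasing on [0,∞) and has unique root s₁ = (1+β)/(2·λ₁·ln 2) − ν whenever s₁ ≥ 0; consequently, the map a ↦ ∫₀^{a(1+β)²} t₁(s) ds over a ≥ 0 is maximized at a* = (1/(1+β)²)·max(s₁, 0). -/
/-- `t₁` is strictly decreasing on `[0,∞)`, has unique root
`s₁ = (1+β)/(2 λ₁ ln 2) − ν` whenever `s₁ ≥ 0`, and the map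
`a ↦ ∫₀^{a(1+β)²} t₁(s) ds` over `a ≥ 0` is maximized at
`a* = (1/(1+β)²) max(s₁,0)`. -/
theorem stmt_2 (ν l1 β : ℝ) (hν : 0 < ν) (hl1 : 0 < l1) (hβ : 0 < β)
    (t1 : ℝ → ℝ)
    (ht1 : ∀ s, t1 s = 1 / (2 * Real.log 2 * (ν + s)) - l1 / (1 + β))
    (s1 : ℝ) (hs1 : s1 = (1 + β) / (2 * l1 * Real.log 2) - ν) :
    StrictAntiOn t1 (Set.Ici 0) ∧
    (0 ≤ s1 → t1 s1 = 0 ∧ ∀ s ∈ Set.Ici (0 : ℝ), t1 s = 0 → s = s1) ∧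
    (∀ a : ℝ, 0 ≤ a →
      (∫ s in (0 : ℝ)..(a * (1 + β) ^ 2), t1 s)
        ≤ ∫ s in (0 : ℝ)..((1 / (1 + β) ^ 2 * max s1 0) * (1 + β) ^ 2), t1 s) := by
  have hL : 0 < Real.log 2 := Real.log_pos (by norm_num)
  have h1β : 0 < 1 + β := by linarith
  -- strict antitonicity
  have hanti : StrictAntiOn t1 (Set.Ici 0) := by
    intro x hx y hy hxy
    rw [ht1, ht1]
    have hx0 : (0:ℝ) ≤ x := hx
    have hy0 : (0:ℝ) ≤ y := hy
    have hvx : 0 < ν + x := by linarith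
    have h : 1 / (2 * Real.log 2 * (ν + y)) < 1 / (2 * Real.log 2 * (ν + x)) := by
      apply one_div_lt_one_div_of_lt (by positivity) (by nlinarith)
    linarith
  have hantiton : AntitoneOn t1 (Set.Ici 0) := hanti.antitoneOn
  -- the root
  have hroot : 0 ≤ s1 → t1 s1 = 0 := by
    intro _
    have hvs : ν + s1 = (1 + β) / (2 * l1 * Real.log 2) := by rw [hs1]; ring
    rw [ht1, hvs, show 2 * Real.log 2 * ((1 + β) / (2 * l1 * Real.log 2)) = (1 + β) / l1 by
      field_simp, one_div_div, sub_self]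
  refine ⟨hanti, fun h0 => ⟨hroot h0, fun s hs he => hanti.injOn hs h0 (by rw [he, hroot h0])⟩, ?_⟩
  -- maximization
  have hcont : ContinuousOn t1 (Set.Ici 0) := by
    have ht1' : t1 = fun s => 1 / (2 * Real.log 2 * (ν + s)) - l1 / (1 + β) := funext ht1
    rw [ht1']
    apply ContinuousOn.sub _ continuousOn_const
    apply ContinuousOn.div continuousOn_const (by fun_prop)
    intro s hs
    have h1 : (0:ℝ) ≤ s := hs
    have h2 : 0 < ν + s := by linarith
    positivity
  have hint : ∀ u v : ℝ, 0 ≤ u → 0 ≤ v → IntervalIntegrable t1 MeasureTheory.volume u v := by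
    intro u v hu hv
    apply ContinuousOn.intervalIntegrable
    exact hcont.mono fun w hw => le_trans (le_inf hu hv) hw.1
  intro a ha
  set m : ℝ := max s1 0 with hmdef
  have hm0 : 0 ≤ m := le_max_right _ _
  have hsimp : (1 / (1 + β) ^ 2 * m) * (1 + β) ^ 2 = m := by
    field_simp
  rw [hsimp]
  set x : ℝ := a * (1 + β) ^ 2 with hxdef
  have hx0 : 0 ≤ x := by positivity
  have htm : t1 m ≤ 0 := by
    rcases le_or_gt 0 s1 with h | h
    · rw [hmdef, max_eq_left h]; exact le_of_eq (hroot h)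
    · rw [hmdef, max_eq_right h.le, ht1]
      have hkey : 1 + β < 2 * l1 * Real.log 2 * ν := by
        have := h
        rw [hs1] at this
        have h2 : (1 + β) / (2 * l1 * Real.log 2) < ν := by linarith
        calc 1 + β = (1 + β) / (2 * l1 * Real.log 2) * (2 * l1 * Real.log 2) := by
              field_simp
          _ < ν * (2 * l1 * Real.log 2) := by
              apply mul_lt_mul_of_pos_right h2 (by positivity)
          _ = 2 * l1 * Real.log 2 * ν := by ring
      have h3 : 1 / (2 * Real.log 2 * (ν + 0)) < l1 / (1 + β) := by
        rw [div_lt_div_iff₀ (by positivity) h1β]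
        nlinarith
      linarith
  rcases le_total x m with hxm | hmx
  · -- x ≤ m : ∫_x^m t1 ≥ 0
    rcases eq_or_lt_of_le hxm with heq | hlt
    · rw [heq]
    · have hm_pos : 0 < m := lt_of_le_of_lt hx0 hlt
      have hs1m : m = s1 := by
        rcases le_or_gt s1 0 with h | h
        · exfalso; rw [hmdef, max_eq_right h] at hm_pos; exact lt_irrefl 0 hm_pos
        · rw [hmdef, max_eq_left h.le]
      have htm0 : t1 m = 0 := by rw [hs1m]; exact hroot (hs1m ▸ hm0)
      have hnonneg : 0 ≤ ∫ s in x..m, t1 s := by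
        apply intervalIntegral.integral_nonneg hxm
        intro u hu
        have hu0 : 0 ≤ u := le_trans hx0 hu.1
        have := hantiton hu0 (Set.mem_Ici.mpr hm0) hu.2
        linarith [htm0 ▸ this]
      have hadd := intervalIntegral.integral_add_adjacent_intervals
        (hint 0 x le_rfl hx0) (hint x m hx0 hm0)
      linarith
  · -- m ≤ x : ∫_m^x t1 ≤ 0
    have hnonpos : (∫ s in m..x, t1 s) ≤ 0 := by
      have h := intervalIntegral.integral_nonneg (f := fun s => -t1 s) (μ := MeasureTheory.volume)
        hmx (fun u hu => by
          have hu0 : 0 ≤ u := le_trans hm0 hu.1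
          have := hantiton (Set.mem_Ici.mpr hm0) hu0 hu.1
          simp only [neg_nonneg]
          linarith)
      rw [intervalIntegral.integral_neg] at h
      linarith
    have hadd := intervalIntegral.integral_add_adjacent_intervals
      (hint 0 m le_rfl hm0) (hint m x hm0 hx0)
    linarith
end

section
/- Let 0 < ν < μ, γ₁ > 0, λ₁ > 0, and define t₂(s) = (γ₁/(2·ln 2))·(1/(ν+s) − 1/(μ+s)) − λ₁ for s ≥ 0. Then t₂ is strictly decreasing on [0,∞), and if t₂(0) ≥ 0 its unique nonnegative root is s₂ = (1/2)·(√((μ−ν)·(μ−ν + 2γ₁/(λ₁·ln 2))) − (μ+ν)). -/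
/-- `t₂` is strictly decreasing on `[0,∞)` and, if `t₂(0) ≥ 0`, its unique
nonnegative root is `s₂ = (1/2)(√((μ−ν)(μ−ν+2γ₁/(λ₁ ln 2))) − (μ+ν))`. -/
theorem stmt_3 (ν μ γ1 l1 : ℝ) (hν : 0 < ν) (hμ : ν < μ) (hγ : 0 < γ1)
    (hl1 : 0 < l1) (t2 : ℝ → ℝ)
    (ht2 : ∀ s, t2 s = γ1 / (2 * Real.log 2) * (1 / (ν + s) - 1 / (μ + s)) - l1)
    (s2 : ℝ)
    (hs2 : s2 = (1 / 2) * (Real.sqrt ((μ - ν) * (μ - ν + 2 * γ1 / (l1 * Real.log 2)))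
        - (μ + ν))) :
    StrictAntiOn t2 (Set.Ici 0) ∧
    (0 ≤ t2 0 → 0 ≤ s2 ∧ t2 s2 = 0 ∧ ∀ s ∈ Set.Ici (0 : ℝ), t2 s = 0 → s = s2) := by
  have hμ0 : (0:ℝ) < μ := hν.trans hμ
  have hL : 0 < Real.log 2 := Real.log_pos one_lt_two
  set L := Real.log 2 with hLdef
  set D := (μ - ν) * (μ - ν + 2 * γ1 / (l1 * L)) with hDdef
  have hD : 0 ≤ D := by
    apply mul_nonneg (by linarith)
    have : 0 < 2 * γ1 / (l1 * L) := by positivity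
    linarith
  have hsq : Real.sqrt D ^ 2 = D := Real.sq_sqrt hD
  have hsqnn : 0 ≤ Real.sqrt D := Real.sqrt_nonneg D
  have hrw : ∀ s, 0 ≤ s → t2 s = γ1 * (μ - ν) / (2 * L * ((ν + s) * (μ + s))) - l1 := by
    intro s hs
    have h1 : (0:ℝ) < ν + s := by linarith
    have h2 : (0:ℝ) < μ + s := by linarith
    rw [ht2]
    field_simp
    ring
  have hanti : StrictAntiOn t2 (Set.Ici 0) := by
    intro a ha b hb hab
    simp only [Set.mem_Ici] at ha hb
    rw [hrw a ha, hrw b hb]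
    have h1 : (0:ℝ) < ν + a := by linarith
    have h2 : (0:ℝ) < μ + a := by linarith
    have h3 : (0:ℝ) < ν + b := by linarith
    have h4 : (0:ℝ) < μ + b := by linarith
    have hnum : 0 < γ1 * (μ - ν) := by nlinarith
    have hden : 2 * L * ((ν + a) * (μ + a)) < 2 * L * ((ν + b) * (μ + b)) := by
      have : (ν + a) * (μ + a) < (ν + b) * (μ + b) := by nlinarith
      nlinarith
    have := div_lt_div_of_pos_left hnum (by positivity) hden
    linarith
  refine ⟨hanti, fun h0 => ?_⟩
  have hd : (μ - ν) * (2 * γ1 / (l1 * L)) * (l1 * L) = 2 * γ1 * (μ - ν) := by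
    field_simp
  have hKey : l1 * (2 * L * (ν * μ)) ≤ γ1 * (μ - ν) := by
    have h00 := hrw 0 le_rfl
    rw [h00] at h0
    simp only [add_zero] at h0
    have hden : (0:ℝ) < 2 * L * (ν * μ) := by positivity
    have : l1 ≤ γ1 * (μ - ν) / (2 * L * (ν * μ)) := by linarith
    have := (le_div_iff₀ hden).mp this
    nlinarith
  have hDge : (μ + ν) ^ 2 ≤ D := by
    rw [hDdef]
    have hlL : (0:ℝ) < l1 * L := by positivity
    nlinarith [hd, hKey]
  have hsqge : μ + ν ≤ Real.sqrt D := by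
    have := Real.sqrt_le_sqrt hDge
    rwa [Real.sqrt_sq (by linarith)] at this
  have hs2nn : 0 ≤ s2 := by rw [hs2]; linarith
  have hfact : (ν + s2) * (μ + s2) = (D - (μ - ν) ^ 2) / 4 := by
    rw [hs2]
    linear_combination (1/4 : ℝ) * hsq
  have hDval : D - (μ - ν) ^ 2 = (μ - ν) * (2 * γ1 / (l1 * L)) := by
    rw [hDdef]; ring
  have hroot : t2 s2 = 0 := by
    rw [hrw s2 hs2nn, sub_eq_zero]
    have hden : (0:ℝ) < 2 * L * ((ν + s2) * (μ + s2)) := by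
      have : (0:ℝ) < ν + s2 := by linarith
      have : (0:ℝ) < μ + s2 := by linarith
      positivity
    rw [div_eq_iff (ne_of_gt hden), hfact, hDval]
    field_simp
    ring
  refine ⟨hs2nn, hroot, fun s hs hts => ?_⟩
  exact hanti.injOn hs (Set.mem_Ici.mpr hs2nn) (by rw [hts, hroot])
end

section
/- Let 0 < ν < μ, γ₁ > 0, λ₁ > 0, and define F(b) = (γ₁/2)·log₂(1+b/ν) − (γ₁/2)·log₂(1+b/μ) − λ₁·b for b ≥ 0. Then F(b) = ∫₀^b t₂(s) ds with t₂(s) = (γ₁/(2 ln 2))·(1/(ν+s) − 1/(μ+s)) − λ₁, F is concave on [0,∞), and F is maximized at b* = max(s₂, 0) where s₂ = (1/2)·(√((μ−ν)(μ−ν + 2γ₁/(λ₁ ln 2))) − (μ+ν)). -/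
/-- The confidential-power objective `F` has integral representation
`F(b) = ∫₀^b t₂`, is concave on `[0,∞)`, and is maximized at `b* = max(s₂,0)`. -/
theorem stmt_17 (ν μ γ1 l1 : ℝ) (hν : 0 < ν) (hμ : ν < μ) (hγ : 0 < γ1)
    (hl1 : 0 < l1) (F t2 : ℝ → ℝ)
    (hF : ∀ b, F b = (γ1 / 2) * Real.logb 2 (1 + b / ν)
        - (γ1 / 2) * Real.logb 2 (1 + b / μ) - l1 * b)
    (ht2 : ∀ s, t2 s = γ1 / (2 * Real.log 2) * (1 / (ν + s) - 1 / (μ + s)) - l1)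
    (s2 : ℝ)
    (hs2 : s2 = (1 / 2) * (Real.sqrt ((μ - ν) * (μ - ν + 2 * γ1 / (l1 * Real.log 2)))
        - (μ + ν))) :
    (∀ b : ℝ, 0 ≤ b → F b = ∫ s in (0 : ℝ)..b, t2 s) ∧
    ConcaveOn ℝ (Set.Ici 0) F ∧
    (∀ b : ℝ, 0 ≤ b → F b ≤ F (max s2 0)) := by
  have hL : 0 < Real.log 2 := Real.log_pos one_lt_two
  have hμ0 : 0 < μ := hν.trans hμ
  -- derivative of F is t2 everywhere on (-ν, ∞)
  have hD : ∀ x : ℝ, -ν < x → HasDerivAt F (t2 x) x := by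
    intro x hx
    have hνx : 0 < ν + x := by linarith
    have hμx : 0 < μ + x := by linarith
    have e1 : 1 + x / ν = (ν + x) / ν := by field_simp
    have e2 : 1 + x / μ = (μ + x) / μ := by field_simp
    have h1 : 0 < 1 + x / ν := by rw [e1]; positivity
    have h2 : 0 < 1 + x / μ := by rw [e2]; positivity
    have d1 : HasDerivAt (fun b : ℝ => 1 + b / ν) (1 / ν) x := by
      simpa using ((hasDerivAt_id x).div_const ν).const_add (1 : ℝ)
    have d2 : HasDerivAt (fun b : ℝ => 1 + b / μ) (1 / μ) x := by
      simpa using ((hasDerivAt_id x).div_const μ).const_add (1 : ℝ)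
    have d1' := d1.log h1.ne'
    have d2' := d2.log h2.ne'
    have dF : HasDerivAt
        (fun b : ℝ => γ1 / 2 * (Real.log (1 + b / ν) / Real.log 2)
          - γ1 / 2 * (Real.log (1 + b / μ) / Real.log 2) - l1 * b)
        (γ1 / 2 * ((1 / ν / (1 + x / ν)) / Real.log 2)
          - γ1 / 2 * ((1 / μ / (1 + x / μ)) / Real.log 2) - l1 * 1) x :=
      (((d1'.div_const _).const_mul _).sub ((d2'.div_const _).const_mul _)).sub
        ((hasDerivAt_id x).const_mul l1)
    have hFeq : F = fun b : ℝ => γ1 / 2 * (Real.log (1 + b / ν) / Real.log 2)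
          - γ1 / 2 * (Real.log (1 + b / μ) / Real.log 2) - l1 * b := by
      funext b; rw [hF]; simp [Real.logb]
    rw [hFeq]
    convert dF using 1
    rw [ht2]
    rw [e1, e2]
    field_simp
  -- interval integrability of t2 on nonneg intervals
  have hInt : ∀ a b : ℝ, 0 ≤ a → 0 ≤ b → IntervalIntegrable t2 MeasureTheory.volume a b := by
    intro a b ha hb
    have hteq : t2 = fun s => γ1 / (2 * Real.log 2) * (1 / (ν + s) - 1 / (μ + s)) - l1 :=
      funext ht2
    rw [hteq]
    apply ContinuousOn.intervalIntegrable
    have hsub : Set.uIcc a b ⊆ Set.Ici (0 : ℝ) := by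
      intro x hx
      have h1 : min a b ≤ x := hx.1
      have h2 : (0:ℝ) ≤ min a b := le_min ha hb
      exact Set.mem_Ici.mpr (h2.trans h1)
    apply ContinuousOn.sub _ continuousOn_const
    apply ContinuousOn.mul continuousOn_const
    apply ContinuousOn.sub
    · exact ContinuousOn.div continuousOn_const (by fun_prop)
        (fun x hx => by have := Set.mem_Ici.mp (hsub hx); positivity)
    · exact ContinuousOn.div continuousOn_const (by fun_prop)
        (fun x hx => by have := Set.mem_Ici.mp (hsub hx); positivity)
  -- FTC representation between nonneg endpoints
  have hrep : ∀ a b : ℝ, 0 ≤ a → 0 ≤ b → ∫ s in a..b, t2 s = F b - F a := by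
    intro a b ha hb
    apply intervalIntegral.integral_eq_sub_of_hasDerivAt _ (hInt a b ha hb)
    intro x hx
    have h1 : min a b ≤ x := hx.1
    have h2 : (0:ℝ) ≤ min a b := le_min ha hb
    exact hD x (by linarith)
  have hF0 : F 0 = 0 := by rw [hF]; simp
  -- Part 1
  have part1 : ∀ b : ℝ, 0 ≤ b → F b = ∫ s in (0 : ℝ)..b, t2 s := by
    intro b hb
    rw [hrep 0 b le_rfl hb, hF0, sub_zero]
  -- antitonicity helper
  have hdiff : ∀ s : ℝ, -ν < s →
      1 / (ν + s) - 1 / (μ + s) = (μ - ν) / ((ν + s) * (μ + s)) := by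
    intro s hs
    have h1 : (0:ℝ) < ν + s := by linarith
    have h2 : (0:ℝ) < μ + s := by linarith
    field_simp
    ring
  -- Part 2: concavity
  have part2 : ConcaveOn ℝ (Set.Ici 0) F := by
    apply AntitoneOn.concaveOn_of_deriv (convex_Ici 0)
    · intro x hx
      exact (hD x (by have := Set.mem_Ici.mp hx; linarith)).continuousAt.continuousWithinAt
    · rw [interior_Ici]
      intro x hx
      have hx' : (0:ℝ) < x := hx
      exact (hD x (by linarith)).differentiableAt.differentiableWithinAt
    · rw [interior_Ici]
      intro x hx y hy hxy
      have hx' : (0:ℝ) < x := hx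
      have hy' : (0:ℝ) < y := hy
      rw [(hD x (by linarith)).deriv, (hD y (by linarith)).deriv]
      rw [ht2, ht2, hdiff x (by linarith), hdiff y (by linarith)]
      have hgx : (0:ℝ) < (ν + x) * (μ + x) := by positivity
      have hgy : (0:ℝ) < (ν + y) * (μ + y) := by positivity
      have hgle : (ν + x) * (μ + x) ≤ (ν + y) * (μ + y) := by nlinarith
      have key : (μ - ν) / ((ν + y) * (μ + y)) ≤ (μ - ν) / ((ν + x) * (μ + x)) := by
        rw [div_le_div_iff₀ hgy hgx]
        nlinarith
      have := mul_le_mul_of_nonneg_left key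
        (by positivity : (0:ℝ) ≤ γ1 / (2 * Real.log 2))
      linarith
  -- key quadratic facts about s2
  set c : ℝ := 2 * γ1 / (l1 * Real.log 2) with hc
  have hcpos : 0 < c := by positivity
  have hargnn : 0 ≤ (μ - ν) * (μ - ν + c) := by nlinarith
  have hDsq : Real.sqrt ((μ - ν) * (μ - ν + c)) ^ 2 = (μ - ν) * (μ - ν + c) :=
    Real.sq_sqrt hargnn
  have hDgt : μ - ν < Real.sqrt ((μ - ν) * (μ - ν + c)) := by
    rw [Real.lt_sqrt (by linarith)]
    nlinarith
  have hνs2 : 0 < ν + s2 := by rw [hs2]; nlinarith [hDgt]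
  have hμs2 : 0 < μ + s2 := by linarith
  have hg2 : (ν + s2) * (μ + s2) * (2 * l1 * Real.log 2) = γ1 * (μ - ν) := by
    rw [hs2]
    have : (ν + 1 / 2 * (Real.sqrt ((μ - ν) * (μ - ν + c)) - (μ + ν))) *
        (μ + 1 / 2 * (Real.sqrt ((μ - ν) * (μ - ν + c)) - (μ + ν))) =
        (Real.sqrt ((μ - ν) * (μ - ν + c)) ^ 2 - (μ - ν) ^ 2) / 4 := by ring
    rw [this, hDsq, hc]
    field_simp
    ring
  -- sign facts
  have hle : ∀ s : ℝ, 0 ≤ s → s2 ≤ s → t2 s ≤ 0 := by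
    intro s hs hss
    have h1 : (0:ℝ) < ν + s := by linarith
    have h2 : (0:ℝ) < μ + s := by linarith
    rw [ht2, hdiff s (by linarith), sub_nonpos, div_mul_div_comm,
      div_le_iff₀ (by positivity)]
    nlinarith [mul_nonneg (sub_nonneg.2 hss) (by linarith : (0:ℝ) ≤ s + s2 + μ + ν),
      mul_pos hl1 hL]
  have hge : ∀ s : ℝ, 0 ≤ s → s ≤ s2 → 0 ≤ t2 s := by
    intro s hs hss
    have h1 : (0:ℝ) < ν + s := by linarith
    have h2 : (0:ℝ) < μ + s := by linarith
    rw [ht2, hdiff s (by linarith), sub_nonneg, div_mul_div_comm,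
      le_div_iff₀ (by positivity)]
    nlinarith [mul_nonneg (sub_nonneg.2 hss) (by linarith : (0:ℝ) ≤ s + s2 + μ + ν),
      mul_pos hl1 hL]
  -- Part 3
  refine ⟨part1, part2, ?_⟩
  intro b hb
  have hb0 : (0:ℝ) ≤ max s2 0 := le_max_right _ _
  have hdelta : F b - F (max s2 0) = ∫ s in (max s2 0)..b, t2 s :=
    (hrep (max s2 0) b hb0 hb).symm
  rcases le_total (max s2 0) b with h | h
  · have hint : ∫ s in (max s2 0)..b, t2 s ≤ 0 := by
      have : 0 ≤ ∫ s in (max s2 0)..b, -t2 s :=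
        intervalIntegral.integral_nonneg h (fun u hu => by
          have : s2 ≤ u := (le_max_left _ _).trans hu.1
          simpa using hle u ((le_max_right _ _).trans hu.1) this)
      rw [intervalIntegral.integral_neg] at this
      linarith
    linarith [hdelta]
  · rcases le_or_gt s2 0 with hs2neg | hs2pos
    · have hmax : max s2 0 = 0 := max_eq_right hs2neg
      have : b = 0 := le_antisymm (hmax ▸ h) hb
      rw [this, hmax]
    · have hmax : max s2 0 = s2 := max_eq_left hs2pos.le
      have hint : 0 ≤ ∫ s in b..(max s2 0), t2 s :=
        intervalIntegral.integral_nonneg (hmax ▸ h) (fun u hu => by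
          have h1 : 0 ≤ u := hb.trans hu.1
          have h2 : u ≤ s2 := by rw [hmax] at hu; exact hu.2
          exact hge u h1 h2)
      rw [hrep b (max s2 0) hb hb0] at hint
      linarith
end
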